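/- Let p be an odd prime, n ≥ 1, 1 ≤ x ≤ p−1, y ∈ ℕ with 1 ≤ x + yp ≤ np² − 1. For i ≥ 1 set dᵢ = (i−1)·n·p·x + x + y·p, and in ZMod (np³) set Rᵢ = {p, np³ − p} ∪ {k·np² + dᵢ : 0 ≤ k ≤ p−1} ∪ {k·np² − dᵢ : 0 ≤ k ≤ p−1}. Then for all i, j ≥ 1, the image of the set Rᵢ under Θ_{np³, p, jn} equals R_{i+j} (as subsets of ZMod (np³); note R_{i+p} = Rᵢ, so the index may be read modulo p). -/

import Mathlib

set_option linter.unusedVariables false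
set_option maxHeartbeats 1000000

/-- The transformation Θ_{n,m,t} : ZMod n → ZMod n, sending x to x + j·t·m where
j is the remainder of the canonical representative of x modulo m. -/
def theta (n m t : ℕ) (x : ZMod n) : ZMod n :=
  x + (((x.val % m) * t * m : ℕ) : ZMod n)

/-- dᵢ = (i−1)·n·p·x + x + y·p. -/
def dIdx (n p x y i : ℕ) : ℕ := (i - 1) * n * p * x + x + y * p

/-- Rᵢ = {p, np³ − p} ∪ {k·np² + dᵢ : 0 ≤ k ≤ p−1} ∪ {k·np² − dᵢ : 0 ≤ k ≤ p−1}
as a subset of ZMod (np³). -/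
def Rconn (n p x y i : ℕ) : Set (ZMod (n * p ^ 3)) :=
  {((p : ℕ) : ZMod (n * p ^ 3)), ((n * p ^ 3 - p : ℕ) : ZMod (n * p ^ 3))} ∪
  {z | ∃ k ≤ p - 1, z = ((k * (n * p ^ 2) + dIdx n p x y i : ℕ) : ZMod (n * p ^ 3))} ∪
  {z | ∃ k ≤ p - 1, z = ((k * (n * p ^ 2) : ℕ) : ZMod (n * p ^ 3)) -
        ((dIdx n p x y i : ℕ) : ZMod (n * p ^ 3))}

section helpers
variable {p n x y : ℕ}

lemma theta_natCast (hp : 0 < p) (hn : 1 ≤ n) (t a : ℕ) :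
    theta (n * p ^ 3) p t ((a : ℕ) : ZMod (n * p ^ 3)) =
      ((a + a % p * t * p : ℕ) : ZMod (n * p ^ 3)) := by
  rw [theta, ZMod.val_natCast, Nat.mod_mod_of_dvd a ⟨n * p ^ 2, by ring⟩]
  push_cast; ring

lemma sub_natCast (hp : 0 < p) (hn : 1 ≤ n) (A B : ℕ) :
    ((A : ℕ) : ZMod (n * p ^ 3)) - ((B : ℕ) : ZMod (n * p ^ 3)) =
      ((A + B * (n * p ^ 3) - B : ℕ) : ZMod (n * p ^ 3)) := by
  have hN : 0 < n * p ^ 3 := by positivity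
  have hB : B ≤ A + B * (n * p ^ 3) :=
    le_trans (Nat.le_mul_of_pos_right B hN) (Nat.le_add_left _ _)
  rw [Nat.cast_sub hB, Nat.cast_add, Nat.cast_mul, ZMod.natCast_self, mul_zero, add_zero]

lemma dIdx_mod (hp : 2 ≤ p) (hx2 : x ≤ p - 1) (y i : ℕ) :
    dIdx n p x y i % p = x := by
  have hxlt : x < p := by omega
  have h1 : dIdx n p x y i = x + ((i - 1) * n * x + y) * p := by unfold dIdx; ring
  rw [h1, Nat.add_mul_mod_self_right, Nat.mod_eq_of_lt hxlt]

lemma dIdx_add {i : ℕ} (hi : 1 ≤ i) (j : ℕ) :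
    dIdx n p x y (i + j) = dIdx n p x y i + j * n * p * x := by
  unfold dIdx
  have h : i + j - 1 = (i - 1) + j := by omega
  rw [h]; ring

lemma mod_helper (hx1 : 1 ≤ x) (hxp : x < p) : x * (p - 1) % p = p - x := by
  obtain ⟨x', rfl⟩ : ∃ x', x = x' + 1 := ⟨x - 1, by omega⟩
  obtain ⟨s, rfl⟩ : ∃ s, p = x' + 1 + (s + 1) := ⟨p - x' - 2, by omega⟩
  have h : (x' + 1) * (x' + 1 + (s + 1) - 1) =
      x' * (x' + 1 + (s + 1)) + (x' + 1 + (s + 1) - (x' + 1)) := by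
    have h1 : x' + 1 + (s + 1) - 1 = x' + s + 1 := by omega
    have h2 : x' + 1 + (s + 1) - (x' + 1) = s + 1 := by omega
    rw [h1, h2]; ring
  rw [h, Nat.mul_add_mod']
  exact Nat.mod_eq_of_lt (by omega)

lemma theta_p_fixed (hp : 2 ≤ p) (hn : 1 ≤ n) (j : ℕ) :
    theta (n * p ^ 3) p (j * n) ((p : ℕ) : ZMod (n * p ^ 3)) = ((p : ℕ) : ZMod (n * p ^ 3)) := by
  rw [theta_natCast (by omega) hn, Nat.mod_self]
  norm_num

lemma theta_Np_fixed (hp : 2 ≤ p) (hn : 1 ≤ n) (j : ℕ) :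
    theta (n * p ^ 3) p (j * n) ((n * p ^ 3 - p : ℕ) : ZMod (n * p ^ 3)) =
      ((n * p ^ 3 - p : ℕ) : ZMod (n * p ^ 3)) := by
  rw [theta_natCast (by omega) hn]
  have h : (n * p ^ 3 - p) % p = 0 := by
    have h1 : n * p ^ 3 - p = (n * p ^ 2 - 1) * p := by
      rw [tsub_mul, one_mul]; ring_nf
    rw [h1, Nat.mul_mod_left]
  rw [h]
  norm_num

lemma theta_pos (hp : 2 ≤ p) (hn : 1 ≤ n) (hx2 : x ≤ p - 1) {i : ℕ} (hi : 1 ≤ i) (j k : ℕ) :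
    theta (n * p ^ 3) p (j * n) ((k * (n * p ^ 2) + dIdx n p x y i : ℕ) : ZMod (n * p ^ 3)) =
      ((k * (n * p ^ 2) + dIdx n p x y (i + j) : ℕ) : ZMod (n * p ^ 3)) := by
  rw [theta_natCast (by omega) hn]
  congr 1
  have hm : (k * (n * p ^ 2) + dIdx n p x y i) % p = x := by
    have h2 : k * (n * p ^ 2) + dIdx n p x y i = dIdx n p x y i + (k * n * p) * p := by ring
    rw [h2, Nat.add_mul_mod_self_right, dIdx_mod hp hx2]
  rw [hm, dIdx_add hi]
  ring

lemma mod_surj (hp0 : 0 < p) (j k' : ℕ) (hk' : k' < p) :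
    ∃ k, k < p ∧ (k + j) % p = k' := by
  refine ⟨(k' + p - j % p) % p, Nat.mod_lt _ hp0, ?_⟩
  rw [Nat.mod_add_mod]
  have h2 := Nat.mod_add_div j p
  have h1 : j % p < p := Nat.mod_lt _ hp0
  have h4 : p * (1 + j / p) = p + p * (j / p) := by ring
  have h3 : k' + p - j % p + j = k' + p * (1 + j / p) := by omega
  rw [h3, Nat.add_mul_mod_self_left]
  exact Nat.mod_eq_of_lt hk'

lemma theta_neg (hp : 2 ≤ p) (hn : 1 ≤ n) (hx1 : 1 ≤ x) (hx2 : x ≤ p - 1)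
    {i : ℕ} (hi : 1 ≤ i) (j k : ℕ) :
    theta (n * p ^ 3) p (j * n)
        (((k * (n * p ^ 2) : ℕ) : ZMod (n * p ^ 3)) -
          ((dIdx n p x y i : ℕ) : ZMod (n * p ^ 3))) =
      ((((k + j) % p) * (n * p ^ 2) : ℕ) : ZMod (n * p ^ 3)) -
        ((dIdx n p x y (i + j) : ℕ) : ZMod (n * p ^ 3)) := by
  have hp0 : 0 < p := by omega
  have hN : 0 < n * p ^ 3 := by positivity
  set d := dIdx n p x y i with hdd
  have hE : (k * (n * p ^ 2) + d * (n * p ^ 3) - d) % p = p - x := by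
    have hdle : d ≤ d * (n * p ^ 3) := Nat.le_mul_of_pos_right d hN
    have hE1 : k * (n * p ^ 2) + d * (n * p ^ 3) - d
        = k * (n * p ^ 2) + d * (n * p ^ 3 - 1) := by
      rw [Nat.mul_sub, mul_one]; omega
    have hNp : p ≤ n * p ^ 3 := by
      calc p ≤ p ^ 3 := Nat.le_self_pow (by norm_num) p
        _ ≤ n * p ^ 3 := Nat.le_mul_of_pos_left _ hn
    have hN1 : (n * p ^ 3 - 1) % p = p - 1 := by
      have h2 : (n * p ^ 2 - 1) * p = n * p ^ 3 - p := by
        rw [tsub_mul, one_mul]; ring_nf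
      have h3 : n * p ^ 3 - 1 = (n * p ^ 2 - 1) * p + (p - 1) := by omega
      rw [h3, Nat.mul_add_mod']
      exact Nat.mod_eq_of_lt (by omega)
    have h4 : (d * (n * p ^ 3 - 1)) % p = p - x := by
      rw [Nat.mul_mod, hdd, dIdx_mod hp hx2, hN1]
      exact mod_helper hx1 (by omega)
    have h5 : (k * (n * p ^ 2)) % p = 0 := by
      rw [show k * (n * p ^ 2) = (k * n * p) * p by ring, Nat.mul_mod_left]
    rw [hE1, Nat.add_mod, h4, h5, Nat.zero_add]
    exact Nat.mod_eq_of_lt (by omega)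
  rw [sub_natCast hp0 hn, theta_natCast hp0 hn, hE, sub_natCast hp0 hn, dIdx_add hi j]
  set r := (k + j) % p with hr
  set q := (k + j) / p with hqq
  have hle1 : d ≤ k * (n * p ^ 2) + d * (n * p ^ 3) :=
    le_trans (Nat.le_mul_of_pos_right d hN) (Nat.le_add_left _ _)
  have hle2 : x ≤ p := by omega
  have hle3 : d + j * n * p * x ≤ r * (n * p ^ 2) + (d + j * n * p * x) * (n * p ^ 3) :=
    le_trans (Nat.le_mul_of_pos_right _ hN) (Nat.le_add_left _ _)
  have hq : (p : ZMod (n * p ^ 3)) * q + r = (k : ZMod (n * p ^ 3)) + j := by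
    have h6 : ((p * q + r : ℕ) : ZMod (n * p ^ 3)) = ((k + j : ℕ) : ZMod (n * p ^ 3)) :=
      congrArg _ (Nat.div_add_mod (k + j) p)
    push_cast at h6
    exact h6
  have h0 : (n : ZMod (n * p ^ 3)) * (p : ZMod (n * p ^ 3)) ^ 3 = 0 := by
    have := ZMod.natCast_self (n * p ^ 3)
    push_cast at this
    exact this
  rw [← hdd]
  push_cast [Nat.cast_sub hle1, Nat.cast_sub hle2, Nat.cast_sub hle3]
  linear_combination (-(n : ZMod (n * p ^ 3)) * (p : ZMod (n * p ^ 3)) ^ 2) * hq +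
    ((q : ZMod (n * p ^ 3)) - (j : ZMod (n * p ^ 3)) * n * p * x) * h0

end helpers

theorem theta_image_Rconn (p n x y : ℕ) (hp : p.Prime) (hodd : Odd p) (hn : 1 ≤ n)
    (hx1 : 1 ≤ x) (hx2 : x ≤ p - 1) (hxy1 : 1 ≤ x + y * p) (hxy2 : x + y * p ≤ n * p ^ 2 - 1) :
    ∀ i j : ℕ, 1 ≤ i → 1 ≤ j →
      theta (n * p ^ 3) p (j * n) '' Rconn n p x y i = Rconn n p x y (i + j) := by
  intro i j hi hj
  have hp2 : 2 ≤ p := hp.two_le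
  have hA : theta (n * p ^ 3) p (j * n) ''
      ({((p : ℕ) : ZMod (n * p ^ 3)), ((n * p ^ 3 - p : ℕ) : ZMod (n * p ^ 3))} :
        Set (ZMod (n * p ^ 3))) =
      {((p : ℕ) : ZMod (n * p ^ 3)), ((n * p ^ 3 - p : ℕ) : ZMod (n * p ^ 3))} := by
    rw [Set.image_insert_eq, Set.image_singleton, theta_p_fixed hp2 hn j,
      theta_Np_fixed hp2 hn j]
  have hB : theta (n * p ^ 3) p (j * n) ''
      {z | ∃ k ≤ p - 1, z = ((k * (n * p ^ 2) + dIdx n p x y i : ℕ) : ZMod (n * p ^ 3))} =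
      {z | ∃ k ≤ p - 1, z = ((k * (n * p ^ 2) + dIdx n p x y (i + j) : ℕ) : ZMod (n * p ^ 3))} := by
    ext z
    simp only [Set.mem_image, Set.mem_setOf_eq]
    constructor
    · rintro ⟨w, ⟨k, hk, rfl⟩, rfl⟩
      exact ⟨k, hk, theta_pos hp2 hn hx2 hi j k⟩
    · rintro ⟨k, hk, rfl⟩
      exact ⟨_, ⟨k, hk, rfl⟩, theta_pos hp2 hn hx2 hi j k⟩
  have hC : theta (n * p ^ 3) p (j * n) ''
      {z | ∃ k ≤ p - 1, z = ((k * (n * p ^ 2) : ℕ) : ZMod (n * p ^ 3)) -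
          ((dIdx n p x y i : ℕ) : ZMod (n * p ^ 3))} =
      {z | ∃ k ≤ p - 1, z = ((k * (n * p ^ 2) : ℕ) : ZMod (n * p ^ 3)) -
          ((dIdx n p x y (i + j) : ℕ) : ZMod (n * p ^ 3))} := by
    ext z
    simp only [Set.mem_image, Set.mem_setOf_eq]
    constructor
    · rintro ⟨w, ⟨k, hk, rfl⟩, rfl⟩
      refine ⟨(k + j) % p, ?_, theta_neg hp2 hn hx1 hx2 hi j k⟩
      have := Nat.mod_lt (k + j) (show 0 < p by omega)
      omega
    · rintro ⟨k', hk', rfl⟩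
      obtain ⟨k, hk, hkk⟩ := mod_surj (show 0 < p by omega) j k' (by omega)
      refine ⟨_, ⟨k, by omega, rfl⟩, ?_⟩
      rw [theta_neg hp2 hn hx1 hx2 hi j k, hkk]
  simp only [Rconn]
  rw [Set.image_union, Set.image_union, hA, hB, hC]
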